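/- Let D be a division ring in which every nonconstant polynomial in one central variable with coefficients in D has a root in D (i.e., D is algebraically closed as a division ring). Then every polynomial f ∈ D[x] that is injective as a function from D to D is surjective. -/
import Mathlib

/-- Over a division ring in which every nonconstant polynomial (in one central
variable) has a root, every injective polynomial map `D → D` is surjective. -/
theorem injective_polynomial_map_surjective (D : Type*) [DivisionRing D]
    (hac : ∀ p : Polynomial D, 0 < p.degree → ∃ a : D, p.eval a = 0)
    (f : Polynomial D) (hf : Function.Injective fun a : D => f.eval a) :
    Function.Surjective fun a : D => f.eval a := by
  intro b
  by_cases hd : 0 < f.degree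
  · have hdeg : 0 < (f - Polynomial.C b).degree := by
      rwa [sub_eq_add_neg, ← Polynomial.C_neg,
        Polynomial.degree_add_C hd]
    obtain ⟨a, ha⟩ := hac _ hdeg
    refine ⟨a, ?_⟩
    simpa [sub_eq_zero] using ha
  · exfalso
    have hc : f = Polynomial.C (f.coeff 0) :=
      Polynomial.eq_C_of_degree_le_zero (not_lt.mp hd)
    have : (0:D) = 1 := hf (show f.eval 0 = f.eval 1 by rw [hc]; simp)
    exact zero_ne_one this
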